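/- Let J be the 1D discrete Schrödinger operator on ℓ²(ℤ) with bounded potential d. If J has an eigenvalue with imaginary part b on the boundary of its numerical range, then for every n ∈ ℤ, Im(d(n)) = b or Im(d(n+1)) = b. -/

import Mathlib

open scoped InnerProductSpace
open scoped ComplexConjugate ENNReal
set_option maxHeartbeats 1000000
set_option synthInstance.maxHeartbeats 1000000

/-- The action of the 1D discrete Schrödinger operator
`(J u)(n) = u(n−1) + d(n) u(n) + u(n+1)`. -/
noncomputable def Jact1 (d : ℤ → ℂ) (u : ℤ → ℂ) (n : ℤ) : ℂ :=
  u (n - 1) + d n * u n + u (n + 1)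

/-- The numerical range of the 1D operator `J`. -/
noncomputable def numRangeJ1 (d : ℤ → ℂ) : Set ℂ :=
  {z | ∃ u v : lp (fun _ : ℤ => ℂ) 2, ‖u‖ = 1 ∧
    (∀ n, v n = Jact1 d (fun m => u m) n) ∧ ⟪u, v⟫_ℂ = z}

noncomputable abbrev E2 := lp (fun _ : ℤ => ℂ) 2

lemma sq_summable (u : E2) : Summable (fun n : ℤ => ‖u n‖ ^ (2:ℝ)) :=
  (lp.memℓp u).summable (by norm_num)

lemma memℓp_shift (u : E2) (k : ℤ) : Memℓp (fun n => u (n + k)) 2 := by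
  apply memℓp_gen
  have h := ((Equiv.addRight k).summable_iff (f := fun n : ℤ => ‖u n‖ ^ (2:ℝ≥0∞).toReal)).2
    ((lp.memℓp u).summable (by norm_num))
  simpa [Function.comp_def] using h

lemma memℓp_dmul (c : ℤ → ℂ) (C : ℝ) (hC : ∀ n, ‖c n‖ ≤ C) (u : E2) :
    Memℓp (fun n => c n * u n) 2 := by
  apply memℓp_gen
  have hC0 : 0 ≤ C := le_trans (norm_nonneg _) (hC 0)
  have hs : Summable (fun n : ℤ => C ^ (2:ℝ≥0∞).toReal * ‖u n‖ ^ (2:ℝ≥0∞).toReal) :=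
    ((lp.memℓp u).summable (by norm_num)).mul_left _
  refine hs.of_nonneg_of_le (fun n => by positivity) (fun n => ?_)
  have h2 : ((2:ℝ≥0∞).toReal) = 2 := by norm_num
  rw [h2]
  calc ‖c n * u n‖ ^ (2:ℝ) = (‖c n‖ * ‖u n‖) ^ (2:ℝ) := by rw [norm_mul]
    _ ≤ (C * ‖u n‖) ^ (2:ℝ) := by
        apply Real.rpow_le_rpow (by positivity)
        exact mul_le_mul_of_nonneg_right (hC n) (norm_nonneg _)
        norm_num
    _ = C ^ (2:ℝ) * ‖u n‖ ^ (2:ℝ) := Real.mul_rpow hC0 (norm_nonneg _)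

lemma memℓp_J (d : ℤ → ℂ) (C : ℝ) (hC : ∀ n, ‖d n‖ ≤ C) (u : E2) :
    Memℓp (fun n => Jact1 d (fun m => u m) n) 2 := by
  have h1 : Memℓp (fun n : ℤ => u (n + (-1)) + d n * u n + u (n + 1)) 2 :=
    ((memℓp_shift u (-1)).add (memℓp_dmul d C hC u)).add (memℓp_shift u 1)
  have : (fun n : ℤ => Jact1 d (fun m => u m) n)
      = fun n : ℤ => u (n + (-1)) + d n * u n + u (n + 1) := by
    funext n; simp [Jact1, sub_eq_add_neg]
  rw [this]; exact h1

noncomputable def Jlp (d : ℤ → ℂ) (C : ℝ) (hC : ∀ n, ‖d n‖ ≤ C) (u : E2) : E2 :=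
  ⟨fun n => Jact1 d (fun m => u m) n, memℓp_J d C hC u⟩

@[simp] lemma Jlp_apply (d : ℤ → ℂ) (C : ℝ) (hC : ∀ n, ‖d n‖ ≤ C) (u : E2) (n : ℤ) :
    (Jlp d C hC u) n = u (n - 1) + d n * u n + u (n + 1) := rfl

lemma Jlp_add (d : ℤ → ℂ) (C : ℝ) (hC : ∀ n, ‖d n‖ ≤ C) (u v : E2) :
    Jlp d C hC (u + v) = Jlp d C hC u + Jlp d C hC v := by
  apply lp.ext; funext n
  simp [Jact1]; ring

lemma Jlp_smul (d : ℤ → ℂ) (C : ℝ) (hC : ∀ n, ‖d n‖ ≤ C) (a : ℂ) (u : E2) :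
    Jlp d C hC (a • u) = a • Jlp d C hC u := by
  apply lp.ext; funext n
  simp [Jact1]; ring

noncomputable def Slp (k : ℤ) (x : E2) : E2 := ⟨fun n => x (n + k), memℓp_shift x k⟩
noncomputable def Dlp (c : ℤ → ℂ) (C : ℝ) (hC : ∀ n, ‖c n‖ ≤ C) (x : E2) : E2 :=
  ⟨fun n => c n * x n, memℓp_dmul c C hC x⟩

@[simp] lemma Slp_apply (k : ℤ) (x : E2) (n : ℤ) : (Slp k x) n = x (n + k) := rfl
@[simp] lemma Dlp_apply (c : ℤ → ℂ) (C : ℝ) (hC : ∀ n, ‖c n‖ ≤ C) (x : E2) (n : ℤ) :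
    (Dlp c C hC x) n = c n * x n := rfl

lemma hC_conj {d : ℤ → ℂ} {C : ℝ} (hC : ∀ n, ‖d n‖ ≤ C) : ∀ n, ‖(starRingEnd ℂ) (d n)‖ ≤ C := by
  intro n; simpa using hC n

lemma Jlp_decomp (d : ℤ → ℂ) (C : ℝ) (hC : ∀ n, ‖d n‖ ≤ C) (x : E2) :
    Jlp d C hC x = Slp (-1) x + Dlp d C hC x + Slp 1 x := by
  apply lp.ext; funext n
  simp [Jact1, sub_eq_add_neg, Jlp, Slp, Dlp]
  rfl

lemma inner_shift (x y : E2) : ⟪Slp 1 x, y⟫_ℂ = ⟪x, Slp (-1) y⟫_ℂ := by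
  rw [lp.inner_eq_tsum, lp.inner_eq_tsum]
  simp only [RCLike.inner_apply, Slp_apply]
  have := Equiv.tsum_eq (Equiv.addRight (-1 : ℤ))
    (fun n => y n * (starRingEnd ℂ) (x (n + 1)))
  simp only [Equiv.coe_addRight] at this
  rw [← this]
  apply tsum_congr; intro n
  norm_num

lemma inner_shift' (x y : E2) : ⟪Slp (-1) x, y⟫_ℂ = ⟪x, Slp 1 y⟫_ℂ := by
  rw [lp.inner_eq_tsum, lp.inner_eq_tsum]
  simp only [RCLike.inner_apply, Slp_apply]
  have := Equiv.tsum_eq (Equiv.addRight (1 : ℤ))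
    (fun n => y n * (starRingEnd ℂ) (x (n + -1)))
  simp only [Equiv.coe_addRight] at this
  rw [← this]
  apply tsum_congr; intro n
  norm_num

lemma inner_dmul (c : ℤ → ℂ) (C : ℝ) (hC : ∀ n, ‖c n‖ ≤ C) (x y : E2) :
    ⟪Dlp (fun n => (starRingEnd ℂ) (c n)) C (hC_conj hC) x, y⟫_ℂ = ⟪x, Dlp c C hC y⟫_ℂ := by
  rw [lp.inner_eq_tsum, lp.inner_eq_tsum]
  simp only [RCLike.inner_apply, Dlp_apply]
  apply tsum_congr; intro n
  simp; ring

lemma Jlp_adjoint (d : ℤ → ℂ) (C : ℝ) (hC : ∀ n, ‖d n‖ ≤ C) (x y : E2) :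
    ⟪Jlp (fun n => (starRingEnd ℂ) (d n)) C (hC_conj hC) x, y⟫_ℂ = ⟪x, Jlp d C hC y⟫_ℂ := by
  rw [Jlp_decomp, Jlp_decomp, inner_add_left, inner_add_left, inner_add_right, inner_add_right,
    inner_shift, inner_shift', inner_dmul d C hC]
  ring


lemma q_strict : HasStrictFDerivAt (fun ε : ℂ => ((‖ε‖^2 : ℝ) : ℂ)) (0 : ℂ →L[ℝ] ℂ) 0 := by
  have h := hasStrictFDerivAt_norm_sq (0:ℂ)
  have h2 := (Complex.ofRealCLM.hasStrictFDerivAt (x := ‖(0:ℂ)‖^2)).comp (0:ℂ) h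
  have h3 : Complex.ofRealCLM.comp (2 • innerSL ℝ (0:ℂ)) = (0 : ℂ →L[ℝ] ℂ) := by
    rw [map_zero, smul_zero, ContinuousLinearMap.comp_zero]
  rw [h3] at h2
  exact h2

lemma map_nhds_F (lam A c B : ℂ) (hA : A ≠ 0) :
    Filter.map (fun ε : ℂ => (lam + ε * A + ((‖ε‖^2:ℝ):ℂ) * c) * (1 + ((‖ε‖^2:ℝ):ℂ) * B)⁻¹)
      (nhds 0) = nhds lam := by
  set q : ℂ → ℂ := fun ε => ((‖ε‖^2:ℝ):ℂ) with hqdef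
  have hq : HasStrictFDerivAt q (0 : ℂ →L[ℝ] ℂ) 0 := q_strict
  have hid : HasStrictFDerivAt (fun ε : ℂ => ε) (ContinuousLinearMap.id ℝ ℂ) 0 :=
    hasStrictFDerivAt_id 0
  have hN : HasStrictFDerivAt (fun ε : ℂ => lam + ε * A + q ε * c)
      (A • ContinuousLinearMap.id ℝ ℂ) 0 := by
    have h1 := hid.mul_const A
    have h2 := hq.mul_const c
    have h3 := ((hasStrictFDerivAt_const lam (0:ℂ)).add h1).add h2
    convert h3 using 1
    ext x
    simp
    · rfl
    · rfl
    · ext x; simp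
  have hG : HasStrictFDerivAt (fun ε : ℂ => 1 + q ε * B) (0 : ℂ →L[ℝ] ℂ) 0 := by
    have h3 := (hasStrictFDerivAt_const (1:ℂ) (0:ℂ)).add (hq.mul_const B)
    convert h3 using 1
    ext x
    simp
    · rfl
    · rfl
    · ext x; simp
  have hG0 : (1 : ℂ) + q 0 * B = 1 := by simp [hqdef]
  have hinv := hasStrictFDerivAt_inv' (𝕜 := ℝ) (R := ℂ) (x := (1:ℂ)) one_ne_zero
  have hD : HasStrictFDerivAt (fun ε : ℂ => (1 + q ε * B)⁻¹) (0 : ℂ →L[ℝ] ℂ) 0 := by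
    have hcomp := HasStrictFDerivAt.comp (x := (0:ℂ))
      (hg := by rw [← hG0] at hinv; exact hinv) (hf := hG)
    convert hcomp using 1
    ext x
    simp
    · rfl
    · ext x; simp
  have hF := hN.mul hD
  set e : ℂ ≃L[ℝ] ℂ := ContinuousLinearEquiv.equivOfInverse
    ((ContinuousLinearMap.mul ℝ ℂ) A) ((ContinuousLinearMap.mul ℝ ℂ) A⁻¹)
    (fun x => by simp [inv_mul_cancel_left₀ hA]) (fun x => by simp [mul_inv_cancel_left₀ hA])
    with hedef
  have hFe : HasStrictFDerivAt
      (fun ε : ℂ => (lam + ε * A + q ε * c) * (1 + q ε * B)⁻¹) (e : ℂ →L[ℝ] ℂ) 0 := by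
    convert hF using 1
    · rfl
    · rfl
    · rfl
    ext x
    have he' : (e : ℂ →L[ℝ] ℂ) x = A * x := rfl
    rw [he']
    simp [hqdef, mul_comm]
  have hmap := hFe.map_nhds_eq_of_equiv
  rw [hmap]
  congr 1
  simp [hqdef]

lemma key_lemma (d : ℤ → ℂ) (C : ℝ) (hC : ∀ n, ‖d n‖ ≤ C) (lam : ℂ) (u : E2)
    (hu : ‖u‖ = 1) (heq : Jlp d C hC u = lam • u)
    (hfr : lam ∈ frontier (numRangeJ1 d)) :
    Jlp (fun n => (starRingEnd ℂ) (d n)) C (hC_conj hC) u = (starRingEnd ℂ) lam • u := by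
  by_contra hne
  set v : E2 := Jlp (fun n => (starRingEnd ℂ) (d n)) C (hC_conj hC) u
      - (starRingEnd ℂ) lam • u with hv
  have hvne : v ≠ 0 := sub_ne_zero.mpr hne
  have huu : ⟪u, u⟫_ℂ = 1 := by
    rw [inner_self_eq_norm_sq_to_K, hu]; norm_num
  have huJu : ⟪u, Jlp d C hC u⟫_ℂ = lam := by
    rw [heq, inner_smul_right, huu, mul_one]
  have hvu : ⟪v, u⟫_ℂ = 0 := by
    rw [hv, inner_sub_left, inner_smul_left, Jlp_adjoint d C hC u u, huJu, huu]
    simp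
  have huv : ⟪u, v⟫_ℂ = 0 := by rw [← inner_conj_symm, hvu, map_zero]
  have hJcu : Jlp (fun n => (starRingEnd ℂ) (d n)) C (hC_conj hC) u
      = v + (starRingEnd ℂ) lam • u := by rw [hv, sub_add_cancel]
  set A : ℂ := ((‖v‖ ^ 2 : ℝ) : ℂ) with hA'
  have huJv : ⟪u, Jlp d C hC v⟫_ℂ = A := by
    rw [← Jlp_adjoint d C hC u v, hJcu, inner_add_left, inner_smul_left,
      inner_self_eq_norm_sq_to_K, huv, mul_zero, add_zero, hA']
    norm_cast
  have hvJu : ⟪v, Jlp d C hC u⟫_ℂ = 0 := by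
    rw [heq, inner_smul_right, hvu, mul_zero]
  have hA : A ≠ 0 := by
    simp only [hA', ne_eq, Complex.ofReal_eq_zero]
    exact pow_ne_zero 2 (norm_ne_zero_iff.mpr hvne)
  set cJ : ℂ := ⟪v, Jlp d C hC v⟫_ℂ with hcJ
  have hmem : ∀ ε : ℂ,
      (lam + ε * A + ((‖ε‖ ^ 2 : ℝ) : ℂ) * cJ) * (1 + ((‖ε‖ ^ 2 : ℝ) : ℂ) * A)⁻¹
        ∈ numRangeJ1 d := by
    intro ε
    set w : E2 := u + ε • v with hw
    have hwJ : Jlp d C hC w = Jlp d C hC u + ε • Jlp d C hC v := by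
      rw [hw, Jlp_add, Jlp_smul]
    have hinner : ⟪w, Jlp d C hC w⟫_ℂ = lam + ε * A + ((‖ε‖ ^ 2 : ℝ) : ℂ) * cJ := by
      rw [hw, hwJ, inner_add_left, inner_add_right, inner_add_right, inner_smul_left,
        inner_smul_right, inner_smul_left, inner_smul_right, huJu, huJv, hvJu, ← hcJ]
      have hce : (starRingEnd ℂ) ε * ε = ((‖ε‖ ^ 2 : ℝ) : ℂ) := by
        rw [RCLike.conj_mul]
        norm_cast
      rw [← mul_assoc, hce]
      ring
    have hw2 : ‖w‖ ^ 2 = 1 + ‖ε‖ ^ 2 * ‖v‖ ^ 2 := by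
      rw [hw, @norm_add_sq ℂ, inner_smul_right, huv, mul_zero, map_zero, hu, norm_smul]
      ring
    have hwne : (‖w‖ : ℝ) ≠ 0 := by
      intro h
      rw [h] at hw2
      nlinarith [sq_nonneg (‖ε‖ * ‖v‖), sq_nonneg ‖ε‖, sq_nonneg ‖v‖,
        mul_nonneg (sq_nonneg ‖ε‖) (sq_nonneg ‖v‖)]
    have hden : ((‖w‖ ^ 2 : ℝ) : ℂ) = 1 + ((‖ε‖ ^ 2 : ℝ) : ℂ) * A := by
      rw [hw2, hA']
      push_cast
      ring
    set k : ℂ := ((‖w‖⁻¹ : ℝ) : ℂ) with hk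
    have hkk : k * k = (((‖w‖ ^ 2 : ℝ)) : ℂ)⁻¹ := by
      rw [hk, ← Complex.ofReal_mul, ← Complex.ofReal_inv]
      congr 1
      rw [← mul_inv, sq]
    refine ⟨k • w, Jlp d C hC (k • w), ?_, fun n => rfl, ?_⟩
    · rw [norm_smul, hk, Complex.norm_real, Real.norm_eq_abs, abs_inv, abs_norm]
      exact inv_mul_cancel₀ hwne
    · rw [Jlp_smul, inner_smul_left, inner_smul_right, ← mul_assoc, hk,
        Complex.conj_ofReal, ← hk, hkk, hinner, hden]
      ring
  have hnh : numRangeJ1 d ∈ nhds lam := by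
    rw [← map_nhds_F lam A cJ A hA, Filter.mem_map]
    exact Filter.mem_of_superset Filter.univ_mem fun ε _ => hmem ε
  have hint : lam ∈ interior (numRangeJ1 d) := mem_interior_iff_mem_nhds.2 hnh
  rw [← closure_diff_interior] at hfr
  exact hfr.2 hint

/-- If the 1D operator `J` has an eigenvalue with imaginary part `b` on the
boundary of its numerical range, then for every `n ∈ ℤ`, `Im(d n) = b` or
`Im(d (n+1)) = b`. -/
theorem stmt15 (d : ℤ → ℂ) (hd : ∃ C, ∀ n, ‖d n‖ ≤ C) (b : ℝ)
    (heig : ∃ (lam : ℂ) (u : lp (fun _ : ℤ => ℂ) 2), lam.im = b ∧ u ≠ 0 ∧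
      (∀ n, Jact1 d (fun m => u m) n = lam * u n) ∧
      lam ∈ frontier (numRangeJ1 d)) :
    ∀ n : ℤ, (d n).im = b ∨ (d (n + 1)).im = b := by
  obtain ⟨lam, u, hb, hune, heq, hfr⟩ := heig
  obtain ⟨C, hC⟩ := hd
  -- the eigen equation as an lp identity
  have heqlp : Jlp d C hC u = lam • u := by
    apply lp.ext
    funext n
    show Jact1 d (fun m => u m) n = (lam • u) n
    rw [heq n, lp.coeFn_smul, Pi.smul_apply, smul_eq_mul]
  -- normalize
  have hun : ‖u‖ ≠ 0 := norm_ne_zero_iff.mpr hune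
  set c : ℂ := ((‖u‖ : ℝ) : ℂ) with hc
  set k : ℂ := ((‖u‖⁻¹ : ℝ) : ℂ) with hk
  have hkc : c * k = 1 := by
    rw [hc, hk, ← Complex.ofReal_mul, mul_inv_cancel₀ hun, Complex.ofReal_one]
  set u' : E2 := k • u with hu'
  have hu'n : ‖u'‖ = 1 := by
    rw [hu', norm_smul, hk, Complex.norm_real, Real.norm_eq_abs, abs_inv, abs_norm]
    exact inv_mul_cancel₀ hun
  have heq' : Jlp d C hC u' = lam • u' := by
    rw [hu', Jlp_smul, heqlp, smul_comm]
  have hkey := key_lemma d C hC lam u' hu'n heq' hfr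
  -- de-normalize
  have hkey2 : Jlp (fun n => (starRingEnd ℂ) (d n)) C (hC_conj hC) u
      = (starRingEnd ℂ) lam • u := by
    have h1 := congrArg (fun x : E2 => c • x) hkey
    rw [← Jlp_smul, hu', smul_comm c ((starRingEnd ℂ) lam), smul_smul, smul_smul, hkc,
      one_smul, mul_one] at h1
    exact h1
  -- pointwise conjugate eigen equation
  have hconj : ∀ n : ℤ, u (n - 1) + (starRingEnd ℂ) (d n) * u n + u (n + 1)
      = (starRingEnd ℂ) lam * u n := by
    intro n
    have := congrFun (congrArg (fun x : E2 => (x : ℤ → ℂ)) hkey2) n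
    simpa [lp.coeFn_smul] using this
  -- on the support, Im d = b
  have hsupp : ∀ n : ℤ, u n ≠ 0 → (d n).im = b := by
    intro n hn
    have h1 : u (n - 1) + d n * u n + u (n + 1) = lam * u n := heq n
    have h2 := hconj n
    have h3 : (d n - (starRingEnd ℂ) (d n)) * u n = (lam - (starRingEnd ℂ) lam) * u n := by
      have := sub_eq_sub_iff_sub_eq_sub.mp (congrArg₂ Sub.sub h1 h2)
      ring_nf
      ring_nf at this ⊢
      linear_combination h1 - h2
    rw [Complex.sub_conj, Complex.sub_conj] at h3
    have h4 : ((d n).im : ℂ) * u n = (lam.im : ℂ) * u n := by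
      have h2I : (2 * Complex.I : ℂ) ≠ 0 := by simp [Complex.I_ne_zero]
      apply mul_left_cancel₀ h2I
      calc 2 * Complex.I * (((d n).im : ℂ) * u n)
          = ((2 * (d n).im : ℝ) : ℂ) * Complex.I * u n := by push_cast; ring
        _ = ((2 * lam.im : ℝ) : ℂ) * Complex.I * u n := by rw [h3]
        _ = 2 * Complex.I * ((lam.im : ℂ) * u n) := by push_cast; ring
    have h5 : ((d n).im : ℂ) = (lam.im : ℂ) := mul_right_cancel₀ hn h4
    have := Complex.ofReal_inj.mp h5
    rw [this, hb]
  -- unique continuation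
  intro n
  by_contra hcon
  push_neg at hcon
  have hn0 : u n = 0 := by
    by_contra h; exact hcon.1 (hsupp n h)
  have hn1 : u (n + 1) = 0 := by
    by_contra h; exact hcon.2 (hsupp (n + 1) h)
  have hrec : ∀ m : ℤ, u (m - 1) + d m * u m + u (m + 1) = lam * u m := heq
  have hfwd : ∀ m, n ≤ m → (u m = 0 ∧ u (m + 1) = 0) := by
    intro m hm
    refine Int.le_induction (motive := fun m _ => ((u : ℤ → ℂ) m = 0 ∧ (u : ℤ → ℂ) (m + 1) = 0)) ?_ ?_ m hm
    · exact ⟨hn0, hn1⟩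
    · rintro m' _ ⟨h1, h2⟩
      refine ⟨h2, ?_⟩
      have h := hrec (m' + 1)
      rw [add_sub_cancel_right, h1, h2] at h
      simpa using h
  have hbwd : ∀ m, m ≤ n → (u m = 0 ∧ u (m + 1) = 0) := by
    intro m hm
    refine Int.le_induction_down (motive := fun m _ => ((u : ℤ → ℂ) m = 0 ∧ (u : ℤ → ℂ) (m + 1) = 0)) ?_ ?_ m hm
    · exact ⟨hn0, hn1⟩
    · rintro m' _ ⟨h1, h2⟩
      constructor
      · have h := hrec m'
        rw [h1, h2] at h
        simpa using h
      · rw [sub_add_cancel]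
        exact h1
  have hall : ∀ m : ℤ, u m = 0 := by
    intro m
    rcases le_total n m with h | h
    · exact (hfwd m h).1
    · exact (hbwd m h).1
  apply hune
  apply lp.ext
  funext m
  rw [hall m]
  rfl
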